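/- arXiv:2409.19355 — 2 statements merged into one kernel-verified Lean document; each statement's English description precedes it below -/
import Mathlib

section
/- Fix e ≥ 2, l ≥ 1, m ∈ ℤ. Let λ and μ be partitions with τ^l(λ) = (λ^l, s^l) and τ^l(μ) = (μ^l, s^l) having the same l-multicharge s^l, and with the same e-core multicharge s_e (i.e. τ_e(λ) = (λ_e, s_e), τ_e(μ) = (μ_e, s_e)). If |μ^l| = |λ^l|, then |μ_e| = |λ_e|. -/
/-- A partition, encoded as a weakly decreasing, eventually zero function
`f : ℕ → ℕ` where `f i` is the `(i+1)`-st part. -/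
def IsPartition (f : ℕ → ℕ) : Prop :=
  Antitone f ∧ ∃ N, ∀ n ≥ N, f n = 0

/-- The size (number of boxes) of a partition. -/
noncomputable def psize (f : ℕ → ℕ) : ℕ := ∑ᶠ i, f i

/-- The β-set of charge `m` of a partition `f`, as a subset of `ℤ`:
its elements are `λ_i − i + m` for `i ≥ 1`. -/
def betaSet (m : ℤ) (f : ℕ → ℕ) : Set ℤ :=
  { b | ∃ i : ℕ, b = (f i : ℤ) - (i + 1) + m }

/-- Shift of a set of β-numbers by `r`. -/
def shiftSet (X : Set ℤ) (r : ℤ) : Set ℤ := { y | y - r ∈ X }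

/-- `X` is a β-set (symbol) of charge `m`: it contains all sufficiently small
integers, is bounded above, and whenever all integers `< N` lie in `X`, the
number of elements of `X` that are `≥ N` equals `m − N`. -/
def IsBetaSet (m : ℤ) (X : Set ℤ) : Prop :=
  (∃ N : ℤ, ∀ x < N, x ∈ X) ∧ (∃ N : ℤ, ∀ x ∈ X, x ≤ N) ∧
    ∀ N : ℤ, (∀ x < N, x ∈ X) → ({x ∈ X | N ≤ x}.ncard : ℤ) = m - N

/-- Runner `j` of the `e`-abacus of a β-set `X`: `{ k | j + k·e ∈ X }`. -/
def runnerSet (e : ℕ) (j : ℕ) (X : Set ℤ) : Set ℤ := { k : ℤ | (j : ℤ) + k * e ∈ X }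

/-- `(g, s)` is the `e`-quotient data of `(f, m)`: for each `j`, the β-set of
`g j` with charge `s j` is runner `j` of the `e`-abacus of `X^m(f)`. -/
def QuotientData (e : ℕ) (m : ℤ) (f : ℕ → ℕ) (g : Fin e → ℕ → ℕ) (s : Fin e → ℤ) : Prop :=
  ∀ j : Fin e, betaSet (s j) (g j) = runnerSet e j (betaSet m f)

/-- The Young diagram of a partition, with 0-based coordinates. -/
def youngDiagram (f : ℕ → ℕ) : Set (ℕ × ℕ) := { p | p.2 < f p.1 }

/-- Component `d` of Uglov's level-`l` decomposition of a β-set `X`: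
write `β = c + e·d + e·l·m'` with `c ∈ {1,…,e}`, `d ∈ {0,…,l−1}`, and collect
`c + e·m'` over the β with middle digit `d`. -/
def uglovComp (e l : ℕ) (d : ℕ) (X : Set ℤ) : Set ℤ :=
  { y | ∃ β ∈ X, ((β - 1).ediv (e : ℤ)).emod (l : ℤ) = (d : ℤ) ∧
      y = (β - 1).emod (e : ℤ) + 1 + (e : ℤ) * ((β - 1).ediv ((e : ℤ) * (l : ℤ))) }

/-- `(L, s)` is the Uglov level-`l` data `τ^l(f)` of the partition `f` with
charge `m`. -/
def UglovData (e l : ℕ) (m : ℤ) (f : ℕ → ℕ) (L : Fin l → ℕ → ℕ) (s : Fin l → ℤ) : Prop :=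
  ∀ d : Fin l, betaSet (s d) (L d) = uglovComp e l d (betaSet m f)

/-- The `l`-partition `L` with multicharge `s` has an addable node of residue
`i` mod `e`: some component `c` has `β ∈ X_c`, `β+1 ∉ X_c`, `β+1 ≡ i (mod e)`. -/
def HasAddableNode (e l : ℕ) (L : Fin l → ℕ → ℕ) (s : Fin l → ℤ) (i : ℤ) : Prop :=
  ∃ (c : Fin l) (β : ℤ), β ∈ betaSet (s c) (L c) ∧ β + 1 ∉ betaSet (s c) (L c) ∧
    (β + 1).emod (e : ℤ) = i

/-- The `l`-partition `L` with multicharge `s` has a removable node of residue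
`i` mod `e`: some component `c` has `β ∈ X_c`, `β−1 ∉ X_c`, `β ≡ i (mod e)`. -/
def HasRemovableNode (e l : ℕ) (L : Fin l → ℕ → ℕ) (s : Fin l → ℤ) (i : ℤ) : Prop :=
  ∃ (c : Fin l) (β : ℤ), β ∈ betaSet (s c) (L c) ∧ β - 1 ∉ betaSet (s c) (L c) ∧
    β.emod (e : ℤ) = i

/-- The last index of `Fin e`. -/
def finLast' (e : ℕ) [NeZero e] : Fin e :=
  ⟨e - 1, Nat.sub_lt (Nat.pos_of_ne_zero (NeZero.ne e)) Nat.one_pos⟩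

/-- `(L, s)` is an `e`-core pair: its `l`-symbol satisfies
`X₀ ⊆ X₁ ⊆ ⋯ ⊆ X_{l-1} ⊆ X₀ + e`. -/
def IsECorePair (e l : ℕ) [NeZero l] (L : Fin l → ℕ → ℕ) (s : Fin l → ℤ) : Prop :=
  (∀ c c' : Fin l, c ≤ c' → betaSet (s c) (L c) ⊆ betaSet (s c') (L c')) ∧
    betaSet (s (finLast' l)) (L (finLast' l)) ⊆ shiftSet (betaSet (s 0) (L 0)) (e : ℤ)

/-- The generator `σ_i` of the (extended) affine symmetric group acting on
`ℤ^e`: `σ_i` (for `i ≠ 0`) swaps coordinates `i−1` and `i`, and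
`σ₀·s = (s_{e-1}+l, s₁, …, s_{e-2}, s₀−l)`. -/
def sigmaAct (e : ℕ) [NeZero e] (l : ℕ) (i : Fin e) (s : Fin e → ℤ) : Fin e → ℤ :=
  if i = 0 then
    fun j => if j = 0 then s (finLast' e) + l else if j = finLast' e then s 0 - l else s j
  else fun j => s (Equiv.swap (i - 1) i j)

/-- The shift `τ` of the extended affine symmetric group:
`τ·s = (s_{e-1}+l, s₀, …, s_{e-2})`. -/
def tauAct (e : ℕ) [NeZero e] (l : ℕ) (s : Fin e → ℤ) : Fin e → ℤ :=
  fun j => if j = 0 then s (finLast' e) + l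
    else s ⟨j.val - 1, lt_of_le_of_lt (Nat.sub_le _ _) j.isLt⟩

/-- The inverse shift `τ⁻¹`: `τ⁻¹·s = (s₁, …, s_{e-1}, s₀−l)`. -/
def tauInvAct (e : ℕ) [NeZero e] (l : ℕ) (s : Fin e → ℤ) : Fin e → ℤ :=
  fun j => if h : j.val + 1 < e then s ⟨j.val + 1, h⟩ else s 0 - l

/-- `φ` is one of the generators of the extended affine symmetric group. -/
def GenOf (e : ℕ) [NeZero e] (l : ℕ) (φ : (Fin e → ℤ) → Fin e → ℤ) : Prop :=
  (∃ i, φ = sigmaAct e l i) ∨ φ = tauAct e l ∨ φ = tauInvAct e l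

/-- `s` and `s'` lie in the same orbit under the extended affine symmetric
group. -/
def SameOrbit (e : ℕ) [NeZero e] (l : ℕ) (s s' : Fin e → ℤ) : Prop :=
  ∃ L : List ((Fin e → ℤ) → Fin e → ℤ), (∀ φ ∈ L, GenOf e l φ) ∧
    L.foldr (fun φ t => φ t) s = s'

/-- The `l`-partition `L` (with multicharge `sl`) lies in the block
`B(se, w)`: the corresponding partition (via Uglov's bijection) has `e`-core
multicharge `se` and weight `w`. -/
def InBlock (e l : ℕ) (m : ℤ) (sl : Fin l → ℤ) (se : Fin e → ℤ) (w : ℕ)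
    (L : Fin l → ℕ → ℕ) : Prop :=
  (∀ c, IsPartition (L c)) ∧
    ∃ (f : ℕ → ℕ) (g : Fin e → ℕ → ℕ), IsPartition f ∧ (∀ j, IsPartition (g j)) ∧
      UglovData e l m f L sl ∧ QuotientData e m f g se ∧ ∑ j, psize (g j) = w

/-- `sl` is the `l`-multicharge associated to the `e`-core multicharge `se`
via level-rank duality: the partition with empty `e`-quotient and `e`-core
multicharge `se` has Uglov `l`-multicharge `sl`. -/
def AssocCharge (e l : ℕ) (m : ℤ) (se : Fin e → ℤ) (sl : Fin l → ℤ) : Prop :=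
  ∃ f : ℕ → ℕ, IsPartition f ∧ QuotientData e m f (fun _ _ => 0) se ∧
    ∃ Λ : Fin l → ℕ → ℕ, (∀ c, IsPartition (Λ c)) ∧ UglovData e l m f Λ sl

/-- The number of nodes of residue `0` (mod `e`) of the `l`-partition `Λ`
with multicharge `s`; the node in row `a`, column `b`, component `c` has
residue `(b − a + s_c) mod e`. -/
noncomputable def residueNodeCount (e l : ℕ) (Λ : Fin l → ℕ → ℕ) (s : Fin l → ℤ) : ℕ :=
  Set.ncard { p : ℕ × ℕ × Fin l |
    p.2.1 < Λ p.2.2 p.1 ∧ (((p.2.1 : ℤ) + 1) - ((p.1 : ℤ) + 1) + s p.2.2).emod (e : ℤ) = 0 }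

/-- An elementary move on β-sets: replace `β ∈ X` by `β − e ∉ X`
(removing an `e`-rim-hook). -/
def ElemMove (e : ℕ) (X Y : Set ℤ) : Prop :=
  ∃ β, β ∈ X ∧ β - (e : ℤ) ∉ X ∧ Y = insert (β - (e : ℤ)) (X \ {β})

namespace LRaux

/-- the enumeration of the beta set -/
def bfun (s : ℤ) (f : ℕ → ℕ) (i : ℕ) : ℤ := (f i : ℤ) - (i + 1) + s

lemma bfun_strictAnti {f : ℕ → ℕ} (hf : Antitone f) (s : ℤ) : StrictAnti (bfun s f) := by
  apply strictAnti_nat_of_succ_lt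
  intro n
  have := hf (Nat.le_add_right n 1)
  unfold bfun
  push_cast
  omega

lemma betaSet_eq_range (s : ℤ) (f : ℕ → ℕ) : betaSet s f = Set.range (bfun s f) := by
  ext x; simp [betaSet, bfun, Set.range, eq_comm]

lemma psize_eq_sum {f : ℕ → ℕ} {N : ℕ} (hN : ∀ n ≥ N, f n = 0) {K : ℕ} (hK : N ≤ K) :
    psize f = ∑ i ∈ Finset.range K, f i := by
  apply finsum_eq_sum_of_support_subset
  intro x hx
  simp only [Function.mem_support] at hx
  simp only [Finset.coe_range, Set.mem_Iio]
  by_contra h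
  exact hx (hN x (le_trans hK (not_lt.mp h)))

lemma sum_shift_reindex (s : ℤ) : ∀ K : ℕ, ∑ i ∈ Finset.range K, (s - 1 - (i:ℤ)) =
    ∑ x ∈ Finset.Ico (s - K) s, x := by
  intro K
  induction K with
  | zero => simp
  | succ K ih =>
    rw [Finset.sum_range_succ, ih]
    have h1 : (s - (K+1 : ℕ) : ℤ) = (s - K) - 1 := by push_cast; ring
    rw [h1]
    have h2 : Finset.Ico ((s - K) - 1) s = insert ((s-K)-1) (Finset.Ico (s - K) s) := by
      ext x; simp only [Finset.mem_Ico, Finset.mem_insert]; omega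
    rw [h2, Finset.sum_insert (by simp)]
    ring

/-- Master lemma: truncation of the β-set of a partition at a low cutoff. -/
lemma master {f : ℕ → ℕ} (hmono : Antitone f) {N : ℕ} (hN : ∀ n ≥ N, f n = 0)
    (s τ : ℤ) (hτ : τ ≤ s - N) :
    ∃ F : Finset ℤ, (↑F = betaSet s f ∩ Set.Ici τ) ∧ (Set.Iio τ ⊆ betaSet s f) ∧
      (F.card : ℤ) = s - τ ∧ ((∑ x ∈ F, x) = (psize f : ℤ) + ∑ x ∈ Finset.Ico τ s, x) := by
  have hNτ : (N : ℤ) ≤ s - τ := by omega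
  set K : ℕ := (s - τ).toNat with hK
  have hKτ : (K : ℤ) = s - τ := Int.toNat_of_nonneg (by omega)
  have hNK : N ≤ K := by omega
  have hb := bfun_strictAnti hmono s
  refine ⟨(Finset.range K).image (bfun s f), ?_, ?_, ?_, ?_⟩
  · ext x
    simp only [Finset.coe_image, Finset.coe_range, Set.mem_image, Set.mem_Iio,
      Set.mem_inter_iff, Set.mem_Ici, betaSet_eq_range, Set.mem_range]
    constructor
    · rintro ⟨i, hi, rfl⟩
      refine ⟨⟨i, rfl⟩, ?_⟩
      have h1 : bfun s f (K - 1) ≤ bfun s f i := hb.antitone (by omega)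
      have h2 : (f (K-1) : ℤ) ≥ 0 := by positivity
      unfold bfun at h1 ⊢
      have : ((K - 1 : ℕ) : ℤ) = (K : ℤ) - 1 := by omega
      omega
    · rintro ⟨⟨i, rfl⟩, hge⟩
      refine ⟨i, ?_, rfl⟩
      by_contra h
      have hiK : K ≤ i := by omega
      have : f i = 0 := hN i (le_trans hNK hiK)
      unfold bfun at hge
      rw [this] at hge
      push_cast at hge
      omega
  · intro x hx
    simp only [Set.mem_Iio] at hx
    rw [betaSet_eq_range]
    refine ⟨(s - 1 - x).toNat, ?_⟩
    have h1 : (N : ℤ) ≤ s - 1 - x := by omega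
    have h2 : ((s - 1 - x).toNat : ℤ) = s - 1 - x := Int.toNat_of_nonneg (by omega)
    have : f (s - 1 - x).toNat = 0 := hN _ (by omega)
    unfold bfun
    rw [this]
    push_cast
    omega
  · rw [Finset.card_image_of_injective _ hb.injective, Finset.card_range, hKτ]
  · rw [Finset.sum_image (fun a _ b _ h => hb.injective h)]
    unfold bfun
    have h1 : psize f = ∑ i ∈ Finset.range K, f i := psize_eq_sum hN hNK
    have h2 : ∑ i ∈ Finset.range K, (s - 1 - (i:ℤ)) = ∑ x ∈ Finset.Ico τ s, x := by
      have := sum_shift_reindex s K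
      rwa [show s - (K:ℤ) = τ by omega] at this
    have h3 : ∑ i ∈ Finset.range K, ((f i : ℤ) - ((i:ℤ) + 1) + s) =
        ∑ i ∈ Finset.range K, (f i : ℤ) + ∑ i ∈ Finset.range K, (s - 1 - (i:ℤ)) := by
      rw [← Finset.sum_add_distrib]
      exact Finset.sum_congr rfl (fun i _ => by ring)
    rw [h3, h2, h1]
    push_cast
    ring
/-- Euclidean uniqueness. -/
lemma emod_ediv_unique {E r x : ℤ} (h0 : 0 ≤ r) (h1 : r < E) :
    (r + E * x) % E = r ∧ (r + E * x) / E = x := by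
  have hE : E ≠ 0 := by omega
  constructor
  · rw [Int.add_mul_emod_self_left]
    exact Int.emod_eq_of_lt h0 h1
  · rw [Int.add_mul_ediv_left _ _ hE, Int.ediv_eq_zero_of_lt h0 h1, zero_add]

lemma ediv_ediv {E L : ℤ} (hE : 0 < E) (hL : 0 < L) (a : ℤ) :
    a / E / L = a / (E * L) := by
  have h1 : a % E + E * (a / E) = a := Int.emod_add_mul_ediv a E
  have h2 : (a / E) % L + L * (a / E / L) = a / E := Int.emod_add_mul_ediv (a / E) L
  have hr1 : 0 ≤ a % E := Int.emod_nonneg a (by omega)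
  have hr1' : a % E < E := Int.emod_lt_of_pos a hE
  have hr2 : 0 ≤ (a / E) % L := Int.emod_nonneg _ (by omega)
  have hr2' : (a / E) % L < L := Int.emod_lt_of_pos _ hL
  have key : a = (a % E + E * ((a / E) % L)) + (E * L) * (a / E / L) := by
    nlinarith [h1, h2]
  have h0 : 0 ≤ a % E + E * ((a / E) % L) := by nlinarith
  have hlt : a % E + E * ((a / E) % L) < E * L := by nlinarith
  have := (emod_ediv_unique h0 hlt (x := a / E / L)).2
  rw [← key] at this
  omega

/-- `a < b*c ↔ a/c < b` for positive `c`, plus the cutoff form we need. -/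
lemma lt_cutoff_iff {E P a : ℤ} (hE : 0 < E) : a < 1 - E * P ↔ (a - 1) / E < -P := by
  rw [Int.ediv_lt_iff_lt_mul hE, show (-P)*E = -(E*P) by ring]
  omega

section Digits

variable {E L : ℤ}

/-- the middle digit. -/
def dig (E L β : ℤ) : ℤ := ((β - 1) / E) % L
/-- the residue digit, in `[1,E]`. -/
def cres (E β : ℤ) : ℤ := (β - 1) % E + 1
/-- the top digit. -/
def qq (E L β : ℤ) : ℤ := (β - 1) / (E * L)
/-- the Uglov projection. -/
def phi (E L β : ℤ) : ℤ := (β - 1) % E + 1 + E * ((β - 1) / (E * L))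
/-- the inverse of the Uglov projection at middle digit `d`. -/
def psi (E L d y : ℤ) : ℤ := (y - 1) % E + 1 + E * d + E * L * ((y - 1) / E)

lemma digit_decomp (hE : 0 < E) (hL : 0 < L) (β : ℤ) :
    β = cres E β + E * dig E L β + E * L * qq E L β := by
  have h1 : (β-1) % E + E * ((β-1) / E) = β - 1 := Int.emod_add_mul_ediv (β-1) E
  have h2 : ((β-1)/E) % L + L * ((β-1) / E / L) = (β-1)/E := Int.emod_add_mul_ediv ((β-1)/E) L
  rw [ediv_ediv hE hL] at h2
  unfold cres dig qq
  linear_combination -h1 - E * h2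

lemma cres_bounds (hE : 0 < E) (β : ℤ) : 0 ≤ cres E β - 1 ∧ cres E β - 1 < E := by
  unfold cres
  refine ⟨by simpa using Int.emod_nonneg (β-1) (by omega), by simpa using Int.emod_lt_of_pos (β-1) hE⟩

lemma dig_bounds (hE : 0 < E) (hL : 0 < L) (β : ℤ) : 0 ≤ dig E L β ∧ dig E L β < L := by
  unfold dig
  exact ⟨Int.emod_nonneg _ (by omega), Int.emod_lt_of_pos _ hL⟩

lemma phi_emod_ediv (hE : 0 < E) (hL : 0 < L) (β : ℤ) :
    (phi E L β - 1) % E = (β - 1) % E ∧ (phi E L β - 1) / E = qq E L β := by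
  have h0 : 0 ≤ (β-1) % E := Int.emod_nonneg (β-1) (by omega)
  have h1 : (β-1) % E < E := Int.emod_lt_of_pos (β-1) hE
  have key : phi E L β - 1 = (β-1) % E + E * qq E L β := by unfold phi qq; ring
  rw [key]
  exact emod_ediv_unique h0 h1

lemma psi_props (hE : 0 < E) (hL : 0 < L) {d : ℤ} (hd0 : 0 ≤ d) (hdL : d < L) (y : ℤ) :
    dig E L (psi E L d y) = d ∧ qq E L (psi E L d y) = (y - 1) / E ∧
      phi E L (psi E L d y) = y := by
  have h0 : 0 ≤ (y-1) % E := Int.emod_nonneg (y-1) (by omega)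
  have h1 : (y-1) % E < E := Int.emod_lt_of_pos (y-1) hE
  have key : psi E L d y - 1 = (y-1) % E + E * (d + L * ((y-1)/E)) := by unfold psi; ring
  have hu := emod_ediv_unique (E := E) h0 h1 (x := d + L * ((y-1)/E))
  rw [← key] at hu
  have hu2 := emod_ediv_unique (E := L) hd0 hdL (x := (y-1)/E)
  have hdig : dig E L (psi E L d y) = d := by
    unfold dig; rw [hu.2]; exact hu2.1
  have hqq : qq E L (psi E L d y) = (y-1)/E := by
    unfold qq
    rw [← ediv_ediv hE hL, hu.2]
    exact hu2.2
  refine ⟨hdig, hqq, ?_⟩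
  unfold phi
  rw [show psi E L d y - 1 = (y-1) % E + E * (d + L * ((y-1)/E)) from key] at *
  unfold qq at hqq
  rw [key] at hu ⊢
  rw [show ((y-1) % E + E * (d + L * ((y-1)/E))) / (E*L) = (y-1)/E by
    rw [← ediv_ediv hE hL, hu.2]; exact hu2.2]
  have := Int.emod_add_mul_ediv (y-1) E
  rw [hu.1]
  omega

lemma psi_phi (hE : 0 < E) (hL : 0 < L) {d β : ℤ} (hdig : dig E L β = d) :
    psi E L d (phi E L β) = β := by
  have h := phi_emod_ediv hE hL β
  unfold psi
  rw [h.1, h.2]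
  have := digit_decomp hE hL β
  rw [hdig] at this
  unfold cres at this
  linarith

end Digits

section Splits

lemma mem_uglovComp {e l d : ℕ} {X : Set ℤ} {y : ℤ} :
    y ∈ uglovComp e l d X ↔
      ∃ β ∈ X, dig (e:ℤ) (l:ℤ) β = (d:ℤ) ∧ y = phi (e:ℤ) (l:ℤ) β := Iff.rfl

lemma phi_lt_iff {e l : ℕ} (he : 0 < e) (hl : 0 < l) (P β : ℤ) :
    phi (e:ℤ) (l:ℤ) β < 1 - (e:ℤ) * P ↔ β < 1 - (e:ℤ) * (l:ℤ) * P := by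
  have hE : (0:ℤ) < (e:ℤ) := by exact_mod_cast he
  have hL : (0:ℤ) < (l:ℤ) := by exact_mod_cast hl
  have hEL : (0:ℤ) < (e:ℤ) * (l:ℤ) := by positivity
  rw [lt_cutoff_iff hE, lt_cutoff_iff hEL, (phi_emod_ediv hE hL β).2]
  rfl

lemma uglov_split {e l : ℕ} (he : 0 < e) (hl : 0 < l) {X : Set ℤ} {F : Finset ℤ} {P : ℤ}
    (hsplit : ↑F = X ∩ Set.Ici (1 - (e:ℤ) * (l:ℤ) * P))
    (hlow : Set.Iio (1 - (e:ℤ) * (l:ℤ) * P) ⊆ X)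
    {d : ℕ} (hd : d < l) :
    (↑((F.filter (fun β => dig (e:ℤ) (l:ℤ) β = (d:ℤ))).image (phi (e:ℤ) (l:ℤ)))
        = uglovComp e l d X ∩ Set.Ici (1 - (e:ℤ) * P)) ∧
      Set.Iio (1 - (e:ℤ) * P) ⊆ uglovComp e l d X := by
  have hE : (0:ℤ) < (e:ℤ) := by exact_mod_cast he
  have hL : (0:ℤ) < (l:ℤ) := by exact_mod_cast hl
  constructor
  · ext y
    simp only [Finset.coe_image, Finset.coe_filter, Set.mem_image, Set.mem_setOf_eq,
      Set.mem_inter_iff, Set.mem_Ici, mem_uglovComp]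
    constructor
    · rintro ⟨β, ⟨hβF, hdig⟩, rfl⟩
      have hβX : β ∈ X ∩ Set.Ici (1 - (e:ℤ) * (l:ℤ) * P) := by
        rw [← hsplit]; exact_mod_cast hβF
      refine ⟨⟨β, hβX.1, hdig, rfl⟩, ?_⟩
      by_contra hlt
      have := (phi_lt_iff he hl P β).mp (by omega)
      have := hβX.2
      simp only [Set.mem_Ici] at this
      omega
    · rintro ⟨⟨β, hβX, hdig, rfl⟩, hge⟩
      refine ⟨β, ⟨?_, hdig⟩, rfl⟩
      have hβge : ¬ (β < 1 - (e:ℤ) * (l:ℤ) * P) := by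
        intro hlt
        have := (phi_lt_iff he hl P β).mpr hlt
        omega
      have : β ∈ X ∩ Set.Ici (1 - (e:ℤ) * (l:ℤ) * P) := ⟨hβX, by simp; omega⟩
      rw [← hsplit] at this
      exact_mod_cast this
  · intro y hy
    simp only [Set.mem_Iio] at hy
    have hd0 : (0:ℤ) ≤ (d:ℤ) := by positivity
    have hdL : (d:ℤ) < (l:ℤ) := by exact_mod_cast hd
    obtain ⟨hdig, hqq, hphi⟩ := psi_props hE hL hd0 hdL y
    rw [mem_uglovComp]
    refine ⟨psi (e:ℤ) (l:ℤ) (d:ℤ) y, ?_, hdig, hphi.symm⟩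
    apply hlow
    simp only [Set.mem_Iio]
    rw [← hphi] at hy
    exact (phi_lt_iff he hl P _).mp hy

lemma mem_runnerSet {e j : ℕ} {X : Set ℤ} {k : ℤ} :
    k ∈ runnerSet e j X ↔ (j:ℤ) + k * (e:ℤ) ∈ X := Iff.rfl

lemma runner_cut_iff {e j : ℕ} (he : 0 < e) (hj : j < e) (t k : ℤ) :
    k < (t - 1 - (j:ℤ)) / (e:ℤ) + 1 ↔ (j:ℤ) + k * (e:ℤ) < t := by
  have hE : (0:ℤ) < (e:ℤ) := by exact_mod_cast he
  rw [Int.lt_add_one_iff, Int.le_ediv_iff_mul_le hE]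
  constructor <;> intro h <;> linarith

lemma runner_split {e : ℕ} (he : 0 < e) {X : Set ℤ} {F : Finset ℤ} {t : ℤ}
    (hsplit : ↑F = X ∩ Set.Ici t) (hlow : Set.Iio t ⊆ X) {j : ℕ} (hj : j < e) :
    (↑((F.filter (fun β => β % (e:ℤ) = (j:ℤ))).image (fun β => β / (e:ℤ)))
        = runnerSet e j X ∩ Set.Ici ((t - 1 - (j:ℤ)) / (e:ℤ) + 1)) ∧
      Set.Iio ((t - 1 - (j:ℤ)) / (e:ℤ) + 1) ⊆ runnerSet e j X := by
  have hE : (0:ℤ) < (e:ℤ) := by exact_mod_cast he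
  have hj0 : (0:ℤ) ≤ (j:ℤ) := by positivity
  have hjE : (j:ℤ) < (e:ℤ) := by exact_mod_cast hj
  constructor
  · ext k
    simp only [Finset.coe_image, Finset.coe_filter, Set.mem_image, Set.mem_setOf_eq,
      Set.mem_inter_iff, Set.mem_Ici, mem_runnerSet]
    constructor
    · rintro ⟨β, ⟨hβF, hmod⟩, rfl⟩
      have hβX : β ∈ X ∩ Set.Ici t := by rw [← hsplit]; exact_mod_cast hβF
      have hrec : (j:ℤ) + (β / (e:ℤ)) * (e:ℤ) = β := by
        have := Int.emod_add_mul_ediv β (e:ℤ)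
        rw [hmod] at this
        linarith
      refine ⟨by rw [hrec]; exact hβX.1, ?_⟩
      rw [← not_lt, runner_cut_iff he hj, hrec, not_lt]
      exact hβX.2
    · rintro ⟨hkX, hge⟩
      set β := (j:ℤ) + k * (e:ℤ) with hβ
      have hβt : ¬ (β < t) := by rw [← runner_cut_iff he hj]; omega
      have hβF : β ∈ F := by
        have : β ∈ X ∩ Set.Ici t := ⟨hkX, by simp; omega⟩
        rw [← hsplit] at this
        exact_mod_cast this
      have huniq := emod_ediv_unique (E := (e:ℤ)) hj0 hjE (x := k)
      refine ⟨β, ⟨hβF, ?_⟩, ?_⟩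
      · rw [hβ, show (j:ℤ) + k * (e:ℤ) = (j:ℤ) + (e:ℤ) * k by ring]
        exact huniq.1
      · rw [hβ, show (j:ℤ) + k * (e:ℤ) = (j:ℤ) + (e:ℤ) * k by ring]
        exact huniq.2
  · intro k hk
    simp only [Set.mem_Iio] at hk
    rw [mem_runnerSet]
    apply hlow
    simp only [Set.mem_Iio]
    exact (runner_cut_iff he hj t k).mp hk

end Splits

section Sums

lemma sum_fiber_fin {n : ℕ} (hn : 0 < n) (F : Finset ℤ) (D : ℤ → ℤ)
    (hD : ∀ β ∈ F, 0 ≤ D β ∧ D β < (n:ℤ)) (w : ℤ → ℤ) :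
    ∑ d : Fin n, ∑ β ∈ F.filter (fun β => D β = ((d:ℕ):ℤ)), w β = ∑ β ∈ F, w β := by
  rw [← Finset.sum_fiberwise_of_maps_to
      (g := fun β => (⟨min (D β).toNat (n-1), by omega⟩ : Fin n))
      (fun x _ => Finset.mem_univ _) w]
  apply Finset.sum_congr rfl
  intro d _
  refine Finset.sum_congr (Finset.filter_congr ?_) (fun _ _ => rfl)
  intro x hx
  have h := hD x hx
  have hd := d.isLt
  constructor
  · intro hh
    apply Fin.ext
    show min (D x).toNat (n-1) = d.val
    omega
  · intro hh
    have hv : min (D x).toNat (n-1) = d.val := congrArg Fin.val hh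
    omega

lemma phi_inj_on_digit {E L : ℤ} (hE : 0 < E) (hL : 0 < L) {d a b : ℤ}
    (ha : dig E L a = d) (hb : dig E L b = d) (hab : phi E L a = phi E L b) : a = b := by
  rw [← psi_phi hE hL ha, hab, psi_phi hE hL hb]

lemma ediv_inj_on_res {E a b : ℤ} (ha : a % E = b % E) (hab : a / E = b / E) : a = b := by
  have h1 := Int.emod_add_mul_ediv a E
  have h2 := Int.emod_add_mul_ediv b E
  rw [ha, hab] at h1
  linarith

lemma cres_of_emod {E j β : ℤ} (h : β % E = j) : cres E β = (j - 1) % E + 1 := by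
  unfold cres
  conv_lhs => rw [Int.sub_emod β 1 E, h]
  rw [Int.sub_emod j 1 E, ← h, Int.emod_emod_of_dvd β dvd_rfl]

lemma beta_eq_phi_decomp {E L : ℤ} (hE : 0 < E) (hL : 0 < L) (β : ℤ) :
    β = L * phi E L β + (1 - L) * cres E β + E * dig E L β := by
  have h := digit_decomp hE hL β
  unfold cres dig qq at h
  unfold phi cres dig
  linear_combination h

end Sums


end LRaux

open LRaux


/-- if two partitions have the same Uglov `l`-multicharge and the
same `e`-core multicharge, and their Uglov `l`-partitions have equal size, then
their `e`-quotients have equal size. -/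
theorem same_size_level_rank (e l : ℕ) (he : 2 ≤ e) (hl : 1 ≤ l) (m : ℤ)
    (f f' : ℕ → ℕ) (hf : IsPartition f) (hf' : IsPartition f')
    (L L' : Fin l → ℕ → ℕ) (sl : Fin l → ℤ)
    (hL : ∀ c, IsPartition (L c)) (hL' : ∀ c, IsPartition (L' c))
    (hu : UglovData e l m f L sl) (hu' : UglovData e l m f' L' sl)
    (g g' : Fin e → ℕ → ℕ) (se : Fin e → ℤ)
    (hg : ∀ j, IsPartition (g j)) (hg' : ∀ j, IsPartition (g' j))
    (hq : QuotientData e m f g se) (hq' : QuotientData e m f' g' se)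
    (hsize : ∑ c, psize (L c) = ∑ c, psize (L' c)) :
    ∑ j, psize (g j) = ∑ j, psize (g' j) := by
  classical
  have he0 : 0 < e := by omega
  have hl0 : 0 < l := hl
  have hE : (0:ℤ) < (e:ℤ) := by exact_mod_cast he0
  have hLz : (0:ℤ) < (l:ℤ) := by exact_mod_cast hl0
  have hE1 : (1:ℤ) ≤ (e:ℤ) := by exact_mod_cast he0
  have hL1 : (1:ℤ) ≤ (l:ℤ) := by exact_mod_cast hl0
  obtain ⟨hfm, Nf, hNf⟩ := hf
  obtain ⟨hfm', Nf', hNf'⟩ := hf'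
  choose NL hNL using fun d => (hL d).2
  choose NL' hNL' using fun d => (hL' d).2
  choose Ng hNg using fun j => (hg j).2
  choose Ng' hNg' using fun j => (hg' j).2
  set P : ℕ := ((Nf:ℤ) + 1 - m).toNat + ((Nf':ℤ) + 1 - m).toNat
    + (∑ d : Fin l, ((NL d : ℤ) + 1 - sl d).toNat)
    + (∑ d : Fin l, ((NL' d : ℤ) + 1 - sl d).toNat)
    + (∑ j : Fin e, ((Ng j : ℤ) + 1 - se j).toNat)
    + (∑ j : Fin e, ((Ng' j : ℤ) + 1 - se j).toNat) with hPdef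
  have hP0 : (0:ℤ) ≤ (P:ℤ) := by positivity
  -- the cutoffs
  have hyt : (1:ℤ) - (e:ℤ)*(l:ℤ)*(P:ℤ) ≤ 1 - (P:ℤ) := by
    have h := mul_nonneg (by nlinarith : (0:ℤ) ≤ (e:ℤ)*(l:ℤ) - 1) hP0
    nlinarith
  have hyy : (1:ℤ) - (e:ℤ)*(P:ℤ) ≤ 1 - (P:ℤ) := by
    have h := mul_nonneg (by nlinarith : (0:ℤ) ≤ (e:ℤ) - 1) hP0
    nlinarith
  have hτbound : ∀ j : Fin e,
      ((1 - (e:ℤ)*(l:ℤ)*(P:ℤ)) - 1 - ((j:ℕ):ℤ))/(e:ℤ) + 1 ≤ 1 - (P:ℤ) := by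
    intro j
    have hj0 : (0:ℤ) ≤ ((j:ℕ):ℤ) := by positivity
    have h1 : (1 - (e:ℤ)*(l:ℤ)*(P:ℤ)) - 1 - ((j:ℕ):ℤ) ≤ (e:ℤ) * (-((l:ℤ)*(P:ℤ))) := by
      have : (e:ℤ) * (-((l:ℤ)*(P:ℤ))) = -((e:ℤ)*(l:ℤ)*(P:ℤ)) := by ring
      omega
    have h2 := Int.ediv_le_ediv hE h1
    rw [Int.mul_ediv_cancel_left _ hE.ne'] at h2
    have h3 := mul_nonneg (by nlinarith : (0:ℤ) ≤ (l:ℤ) - 1) hP0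
    nlinarith
  -- conditions from the choice of P
  have hcf : 1 - (e:ℤ)*(l:ℤ)*(P:ℤ) ≤ m - (Nf:ℤ) := by
    have h1 : ((Nf:ℤ) + 1 - m).toNat ≤ P := by rw [hPdef]; omega
    have h2 : (Nf:ℤ) + 1 - m ≤ (P:ℤ) :=
      le_trans (Int.self_le_toNat _) (by exact_mod_cast h1)
    omega
  have hcf' : 1 - (e:ℤ)*(l:ℤ)*(P:ℤ) ≤ m - (Nf':ℤ) := by
    have h1 : ((Nf':ℤ) + 1 - m).toNat ≤ P := by rw [hPdef]; omega
    have h2 : (Nf':ℤ) + 1 - m ≤ (P:ℤ) :=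
      le_trans (Int.self_le_toNat _) (by exact_mod_cast h1)
    omega
  have hcL : ∀ d : Fin l, 1 - (e:ℤ)*(P:ℤ) ≤ sl d - (NL d : ℤ) := by
    intro d
    have h0 : ((NL d : ℤ) + 1 - sl d).toNat ≤ ∑ d' : Fin l, ((NL d' : ℤ) + 1 - sl d').toNat :=
      Finset.single_le_sum (f := fun d' : Fin l => ((NL d' : ℤ) + 1 - sl d').toNat)
        (fun i _ => Nat.zero_le _) (Finset.mem_univ d)
    have h1 : ((NL d : ℤ) + 1 - sl d).toNat ≤ P := by rw [hPdef]; omega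
    have h2 : (NL d : ℤ) + 1 - sl d ≤ (P:ℤ) :=
      le_trans (Int.self_le_toNat _) (by exact_mod_cast h1)
    omega
  have hcL' : ∀ d : Fin l, 1 - (e:ℤ)*(P:ℤ) ≤ sl d - (NL' d : ℤ) := by
    intro d
    have h0 : ((NL' d : ℤ) + 1 - sl d).toNat ≤ ∑ d' : Fin l, ((NL' d' : ℤ) + 1 - sl d').toNat :=
      Finset.single_le_sum (f := fun d' : Fin l => ((NL' d' : ℤ) + 1 - sl d').toNat)
        (fun i _ => Nat.zero_le _) (Finset.mem_univ d)
    have h1 : ((NL' d : ℤ) + 1 - sl d).toNat ≤ P := by rw [hPdef]; omega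
    have h2 : (NL' d : ℤ) + 1 - sl d ≤ (P:ℤ) :=
      le_trans (Int.self_le_toNat _) (by exact_mod_cast h1)
    omega
  have hcg : ∀ j : Fin e,
      ((1 - (e:ℤ)*(l:ℤ)*(P:ℤ)) - 1 - ((j:ℕ):ℤ))/(e:ℤ) + 1 ≤ se j - (Ng j : ℤ) := by
    intro j
    have h0 : ((Ng j : ℤ) + 1 - se j).toNat ≤ ∑ j' : Fin e, ((Ng j' : ℤ) + 1 - se j').toNat :=
      Finset.single_le_sum (f := fun j' : Fin e => ((Ng j' : ℤ) + 1 - se j').toNat)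
        (fun i _ => Nat.zero_le _) (Finset.mem_univ j)
    have h1 : ((Ng j : ℤ) + 1 - se j).toNat ≤ P := by rw [hPdef]; omega
    have h2 : (Ng j : ℤ) + 1 - se j ≤ (P:ℤ) :=
      le_trans (Int.self_le_toNat _) (by exact_mod_cast h1)
    have := hτbound j
    omega
  have hcg' : ∀ j : Fin e,
      ((1 - (e:ℤ)*(l:ℤ)*(P:ℤ)) - 1 - ((j:ℕ):ℤ))/(e:ℤ) + 1 ≤ se j - (Ng' j : ℤ) := by
    intro j
    have h0 : ((Ng' j : ℤ) + 1 - se j).toNat ≤ ∑ j' : Fin e, ((Ng' j' : ℤ) + 1 - se j').toNat :=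
      Finset.single_le_sum (f := fun j' : Fin e => ((Ng' j' : ℤ) + 1 - se j').toNat)
        (fun i _ => Nat.zero_le _) (Finset.mem_univ j)
    have h1 : ((Ng' j : ℤ) + 1 - se j).toNat ≤ P := by rw [hPdef]; omega
    have h2 : (Ng' j : ℤ) + 1 - se j ≤ (P:ℤ) :=
      le_trans (Int.self_le_toNat _) (by exact_mod_cast h1)
    have := hτbound j
    omega
  -- truncated beta-sets of f and f'
  obtain ⟨F, hF1, hF2, hFcard, hFsum⟩ :=
    master hfm hNf m (1 - (e:ℤ)*(l:ℤ)*(P:ℤ)) hcf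
  obtain ⟨F', hF'1, hF'2, hF'card, hF'sum⟩ :=
    master hfm' hNf' m (1 - (e:ℤ)*(l:ℤ)*(P:ℤ)) hcf'
  -- per-component data for the Uglov l-partitions
  have keyL : ∀ d : Fin l,
      (((F.filter (fun β => dig (e:ℤ) (l:ℤ) β = ((d:ℕ):ℤ))).card : ℤ)
          = sl d - (1 - (e:ℤ)*(P:ℤ))) ∧
        ((∑ β ∈ F.filter (fun β => dig (e:ℤ) (l:ℤ) β = ((d:ℕ):ℤ)), phi (e:ℤ) (l:ℤ) β)
          = (psize (L d) : ℤ) + ∑ x ∈ Finset.Ico (1 - (e:ℤ)*(P:ℤ)) (sl d), x) := by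
    intro d
    obtain ⟨G, hG1, hG2, hGcard, hGsum⟩ :=
      master (hL d).1 (hNL d) (sl d) (1 - (e:ℤ)*(P:ℤ)) (hcL d)
    obtain ⟨hU1, hU2⟩ := uglov_split he0 hl0 hF1 hF2 d.isLt
    have hUG : (F.filter (fun β => dig (e:ℤ) (l:ℤ) β = ((d:ℕ):ℤ))).image
        (phi (e:ℤ) (l:ℤ)) = G := by
      apply Finset.coe_injective
      rw [hU1, hG1, hu d]
    have hinj : ∀ a ∈ F.filter (fun β => dig (e:ℤ) (l:ℤ) β = ((d:ℕ):ℤ)),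
        ∀ b ∈ F.filter (fun β => dig (e:ℤ) (l:ℤ) β = ((d:ℕ):ℤ)),
          phi (e:ℤ) (l:ℤ) a = phi (e:ℤ) (l:ℤ) b → a = b := by
      intro a ha b hb hab
      exact phi_inj_on_digit hE hLz (Finset.mem_filter.mp ha).2 (Finset.mem_filter.mp hb).2 hab
    constructor
    · have hcc : G.card = (F.filter (fun β => dig (e:ℤ) (l:ℤ) β = ((d:ℕ):ℤ))).card := by
        rw [← hUG]
        exact Finset.card_image_of_injOn
          (fun a ha b hb hab => hinj a (Finset.mem_coe.mp ha) b (Finset.mem_coe.mp hb) hab)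
      rw [← hcc]
      exact hGcard
    · have hss : (∑ x ∈ G, x)
          = ∑ β ∈ F.filter (fun β => dig (e:ℤ) (l:ℤ) β = ((d:ℕ):ℤ)), phi (e:ℤ) (l:ℤ) β := by
        rw [← hUG]
        exact Finset.sum_image hinj
      rw [← hss]
      exact hGsum
  have keyL' : ∀ d : Fin l,
      (((F'.filter (fun β => dig (e:ℤ) (l:ℤ) β = ((d:ℕ):ℤ))).card : ℤ)
          = sl d - (1 - (e:ℤ)*(P:ℤ))) ∧
        ((∑ β ∈ F'.filter (fun β => dig (e:ℤ) (l:ℤ) β = ((d:ℕ):ℤ)), phi (e:ℤ) (l:ℤ) β)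
          = (psize (L' d) : ℤ) + ∑ x ∈ Finset.Ico (1 - (e:ℤ)*(P:ℤ)) (sl d), x) := by
    intro d
    obtain ⟨G, hG1, hG2, hGcard, hGsum⟩ :=
      master (hL' d).1 (hNL' d) (sl d) (1 - (e:ℤ)*(P:ℤ)) (hcL' d)
    obtain ⟨hU1, hU2⟩ := uglov_split he0 hl0 hF'1 hF'2 d.isLt
    have hUG : (F'.filter (fun β => dig (e:ℤ) (l:ℤ) β = ((d:ℕ):ℤ))).image
        (phi (e:ℤ) (l:ℤ)) = G := by
      apply Finset.coe_injective
      rw [hU1, hG1, hu' d]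
    have hinj : ∀ a ∈ F'.filter (fun β => dig (e:ℤ) (l:ℤ) β = ((d:ℕ):ℤ)),
        ∀ b ∈ F'.filter (fun β => dig (e:ℤ) (l:ℤ) β = ((d:ℕ):ℤ)),
          phi (e:ℤ) (l:ℤ) a = phi (e:ℤ) (l:ℤ) b → a = b := by
      intro a ha b hb hab
      exact phi_inj_on_digit hE hLz (Finset.mem_filter.mp ha).2 (Finset.mem_filter.mp hb).2 hab
    constructor
    · have hcc : G.card = (F'.filter (fun β => dig (e:ℤ) (l:ℤ) β = ((d:ℕ):ℤ))).card := by
        rw [← hUG]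
        exact Finset.card_image_of_injOn
          (fun a ha b hb hab => hinj a (Finset.mem_coe.mp ha) b (Finset.mem_coe.mp hb) hab)
      rw [← hcc]
      exact hGcard
    · have hss : (∑ x ∈ G, x)
          = ∑ β ∈ F'.filter (fun β => dig (e:ℤ) (l:ℤ) β = ((d:ℕ):ℤ)), phi (e:ℤ) (l:ℤ) β := by
        rw [← hUG]
        exact Finset.sum_image hinj
      rw [← hss]
      exact hGsum
  -- per-runner data for the e-quotients
  have keyQ : ∀ j : Fin e,
      (((F.filter (fun β => β % (e:ℤ) = ((j:ℕ):ℤ))).card : ℤ)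
          = se j - (((1 - (e:ℤ)*(l:ℤ)*(P:ℤ)) - 1 - ((j:ℕ):ℤ))/(e:ℤ) + 1)) ∧
        ((∑ β ∈ F.filter (fun β => β % (e:ℤ) = ((j:ℕ):ℤ)), β / (e:ℤ))
          = (psize (g j) : ℤ)
            + ∑ x ∈ Finset.Ico (((1 - (e:ℤ)*(l:ℤ)*(P:ℤ)) - 1 - ((j:ℕ):ℤ))/(e:ℤ) + 1) (se j), x) := by
    intro j
    obtain ⟨G, hG1, hG2, hGcard, hGsum⟩ := master (hg j).1 (hNg j) (se j) _ (hcg j)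
    obtain ⟨hQ1, hQ2⟩ := runner_split he0 hF1 hF2 j.isLt
    have hQG : (F.filter (fun β => β % (e:ℤ) = ((j:ℕ):ℤ))).image (fun β => β / (e:ℤ)) = G := by
      apply Finset.coe_injective
      rw [hQ1, hG1, hq j]
    have hinj : ∀ a ∈ F.filter (fun β => β % (e:ℤ) = ((j:ℕ):ℤ)),
        ∀ b ∈ F.filter (fun β => β % (e:ℤ) = ((j:ℕ):ℤ)), a / (e:ℤ) = b / (e:ℤ) → a = b := by
      intro a ha b hb hab
      refine ediv_inj_on_res ?_ hab
      rw [(Finset.mem_filter.mp ha).2, (Finset.mem_filter.mp hb).2]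
    constructor
    · have hcc : G.card = (F.filter (fun β => β % (e:ℤ) = ((j:ℕ):ℤ))).card := by
        rw [← hQG]
        exact Finset.card_image_of_injOn
          (fun a ha b hb hab => hinj a (Finset.mem_coe.mp ha) b (Finset.mem_coe.mp hb) hab)
      rw [← hcc]
      exact hGcard
    · have hss : (∑ x ∈ G, x)
          = ∑ β ∈ F.filter (fun β => β % (e:ℤ) = ((j:ℕ):ℤ)), β / (e:ℤ) := by
        rw [← hQG]
        exact Finset.sum_image hinj
      rw [← hss]
      exact hGsum
  have keyQ' : ∀ j : Fin e,
      (((F'.filter (fun β => β % (e:ℤ) = ((j:ℕ):ℤ))).card : ℤ)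
          = se j - (((1 - (e:ℤ)*(l:ℤ)*(P:ℤ)) - 1 - ((j:ℕ):ℤ))/(e:ℤ) + 1)) ∧
        ((∑ β ∈ F'.filter (fun β => β % (e:ℤ) = ((j:ℕ):ℤ)), β / (e:ℤ))
          = (psize (g' j) : ℤ)
            + ∑ x ∈ Finset.Ico (((1 - (e:ℤ)*(l:ℤ)*(P:ℤ)) - 1 - ((j:ℕ):ℤ))/(e:ℤ) + 1) (se j), x) := by
    intro j
    obtain ⟨G, hG1, hG2, hGcard, hGsum⟩ := master (hg' j).1 (hNg' j) (se j) _ (hcg' j)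
    obtain ⟨hQ1, hQ2⟩ := runner_split he0 hF'1 hF'2 j.isLt
    have hQG : (F'.filter (fun β => β % (e:ℤ) = ((j:ℕ):ℤ))).image (fun β => β / (e:ℤ)) = G := by
      apply Finset.coe_injective
      rw [hQ1, hG1, hq' j]
    have hinj : ∀ a ∈ F'.filter (fun β => β % (e:ℤ) = ((j:ℕ):ℤ)),
        ∀ b ∈ F'.filter (fun β => β % (e:ℤ) = ((j:ℕ):ℤ)), a / (e:ℤ) = b / (e:ℤ) → a = b := by
      intro a ha b hb hab
      refine ediv_inj_on_res ?_ hab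
      rw [(Finset.mem_filter.mp ha).2, (Finset.mem_filter.mp hb).2]
    constructor
    · have hcc : G.card = (F'.filter (fun β => β % (e:ℤ) = ((j:ℕ):ℤ))).card := by
        rw [← hQG]
        exact Finset.card_image_of_injOn
          (fun a ha b hb hab => hinj a (Finset.mem_coe.mp ha) b (Finset.mem_coe.mp hb) hab)
      rw [← hcc]
      exact hGcard
    · have hss : (∑ x ∈ G, x)
          = ∑ β ∈ F'.filter (fun β => β % (e:ℤ) = ((j:ℕ):ℤ)), β / (e:ℤ) := by
        rw [← hQG]
        exact Finset.sum_image hinj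
      rw [← hss]
      exact hGsum
  -- fiberwise decompositions of the truncated beta-sets
  have hdigb : ∀ β ∈ F, 0 ≤ dig (e:ℤ) (l:ℤ) β ∧ dig (e:ℤ) (l:ℤ) β < (l:ℤ) :=
    fun β _ => dig_bounds hE hLz β
  have hdigb' : ∀ β ∈ F', 0 ≤ dig (e:ℤ) (l:ℤ) β ∧ dig (e:ℤ) (l:ℤ) β < (l:ℤ) :=
    fun β _ => dig_bounds hE hLz β
  have hmodb : ∀ β ∈ F, 0 ≤ β % (e:ℤ) ∧ β % (e:ℤ) < (e:ℤ) :=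
    fun β _ => ⟨Int.emod_nonneg β hE.ne', Int.emod_lt_of_pos β hE⟩
  have hmodb' : ∀ β ∈ F', 0 ≤ β % (e:ℤ) ∧ β % (e:ℤ) < (e:ℤ) :=
    fun β _ => ⟨Int.emod_nonneg β hE.ne', Int.emod_lt_of_pos β hE⟩
  have hfib1 := sum_fiber_fin hl0 F (dig (e:ℤ) (l:ℤ)) hdigb (phi (e:ℤ) (l:ℤ))
  have hfib1' := sum_fiber_fin hl0 F' (dig (e:ℤ) (l:ℤ)) hdigb' (phi (e:ℤ) (l:ℤ))
  have hfib2 := sum_fiber_fin hl0 F (dig (e:ℤ) (l:ℤ)) hdigb (dig (e:ℤ) (l:ℤ))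
  have hfib2' := sum_fiber_fin hl0 F' (dig (e:ℤ) (l:ℤ)) hdigb' (dig (e:ℤ) (l:ℤ))
  have hfib3 := sum_fiber_fin he0 F (fun β => β % (e:ℤ)) hmodb (fun β => β)
  have hfib3' := sum_fiber_fin he0 F' (fun β => β % (e:ℤ)) hmodb' (fun β => β)
  have hfib4 := sum_fiber_fin he0 F (fun β => β % (e:ℤ)) hmodb (cres (e:ℤ))
  have hfib4' := sum_fiber_fin he0 F' (fun β => β % (e:ℤ)) hmodb' (cres (e:ℤ))
  -- the phi-sums agree
  have hsizeZ : ∑ d : Fin l, (psize (L d) : ℤ) = ∑ d : Fin l, (psize (L' d) : ℤ) := by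
    exact_mod_cast hsize
  have hphiFF' : ∑ β ∈ F, phi (e:ℤ) (l:ℤ) β = ∑ β ∈ F', phi (e:ℤ) (l:ℤ) β := by
    rw [← hfib1, ← hfib1']
    rw [Finset.sum_congr rfl (fun d _ => (keyL d).2),
      Finset.sum_congr rfl (fun d _ => (keyL' d).2)]
    rw [Finset.sum_add_distrib, Finset.sum_add_distrib, hsizeZ]
  -- the dig-sums are determined
  have hdigF : ∑ β ∈ F, dig (e:ℤ) (l:ℤ) β
      = ∑ d : Fin l, (sl d - (1 - (e:ℤ)*(P:ℤ))) * ((d:ℕ):ℤ) := by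
    rw [← hfib2]
    apply Finset.sum_congr rfl
    intro d _
    rw [Finset.sum_congr rfl (fun β hβ => (Finset.mem_filter.mp hβ).2), Finset.sum_const,
      nsmul_eq_mul, (keyL d).1]
  have hdigF' : ∑ β ∈ F', dig (e:ℤ) (l:ℤ) β
      = ∑ d : Fin l, (sl d - (1 - (e:ℤ)*(P:ℤ))) * ((d:ℕ):ℤ) := by
    rw [← hfib2']
    apply Finset.sum_congr rfl
    intro d _
    rw [Finset.sum_congr rfl (fun β hβ => (Finset.mem_filter.mp hβ).2), Finset.sum_const,
      nsmul_eq_mul, (keyL' d).1]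
  -- the cres-sums are determined
  have hcresF : ∑ β ∈ F, cres (e:ℤ) β
      = ∑ j : Fin e, (se j - (((1 - (e:ℤ)*(l:ℤ)*(P:ℤ)) - 1 - ((j:ℕ):ℤ))/(e:ℤ) + 1))
          * ((((j:ℕ):ℤ) - 1) % (e:ℤ) + 1) := by
    rw [← hfib4]
    apply Finset.sum_congr rfl
    intro j _
    rw [Finset.sum_congr rfl (fun β hβ => cres_of_emod (Finset.mem_filter.mp hβ).2),
      Finset.sum_const, nsmul_eq_mul, (keyQ j).1]
  have hcresF' : ∑ β ∈ F', cres (e:ℤ) β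
      = ∑ j : Fin e, (se j - (((1 - (e:ℤ)*(l:ℤ)*(P:ℤ)) - 1 - ((j:ℕ):ℤ))/(e:ℤ) + 1))
          * ((((j:ℕ):ℤ) - 1) % (e:ℤ) + 1) := by
    rw [← hfib4']
    apply Finset.sum_congr rfl
    intro j _
    rw [Finset.sum_congr rfl (fun β hβ => cres_of_emod (Finset.mem_filter.mp hβ).2),
      Finset.sum_const, nsmul_eq_mul, (keyQ' j).1]
  -- the total sums agree
  have hAF : ∑ β ∈ F, β = (l:ℤ) * (∑ β ∈ F, phi (e:ℤ) (l:ℤ) β)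
      + (1 - (l:ℤ)) * (∑ β ∈ F, cres (e:ℤ) β) + (e:ℤ) * (∑ β ∈ F, dig (e:ℤ) (l:ℤ) β) := by
    have h1 : ∑ β ∈ F, β = ∑ β ∈ F, ((l:ℤ) * phi (e:ℤ) (l:ℤ) β
        + (1-(l:ℤ)) * cres (e:ℤ) β + (e:ℤ) * dig (e:ℤ) (l:ℤ) β) :=
      Finset.sum_congr rfl (fun β _ => beta_eq_phi_decomp hE hLz β)
    rw [h1, Finset.sum_add_distrib, Finset.sum_add_distrib, ← Finset.mul_sum, ← Finset.mul_sum,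
      ← Finset.mul_sum]
  have hAF' : ∑ β ∈ F', β = (l:ℤ) * (∑ β ∈ F', phi (e:ℤ) (l:ℤ) β)
      + (1 - (l:ℤ)) * (∑ β ∈ F', cres (e:ℤ) β) + (e:ℤ) * (∑ β ∈ F', dig (e:ℤ) (l:ℤ) β) := by
    have h1 : ∑ β ∈ F', β = ∑ β ∈ F', ((l:ℤ) * phi (e:ℤ) (l:ℤ) β
        + (1-(l:ℤ)) * cres (e:ℤ) β + (e:ℤ) * dig (e:ℤ) (l:ℤ) β) :=
      Finset.sum_congr rfl (fun β _ => beta_eq_phi_decomp hE hLz β)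
    rw [h1, Finset.sum_add_distrib, Finset.sum_add_distrib, ← Finset.mul_sum, ← Finset.mul_sum,
      ← Finset.mul_sum]
  have hFF' : ∑ β ∈ F, β = ∑ β ∈ F', β := by
    rw [hAF, hAF', hphiFF', hcresF, hcresF', hdigF, hdigF']
  -- runner decomposition of the total sums
  have hrunF : ∑ β ∈ F, β
      = (∑ j : Fin e, (se j - (((1 - (e:ℤ)*(l:ℤ)*(P:ℤ)) - 1 - ((j:ℕ):ℤ))/(e:ℤ) + 1)) * ((j:ℕ):ℤ))
        + (e:ℤ) * ∑ j : Fin e, ((psize (g j) : ℤ)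
          + ∑ x ∈ Finset.Ico (((1 - (e:ℤ)*(l:ℤ)*(P:ℤ)) - 1 - ((j:ℕ):ℤ))/(e:ℤ) + 1) (se j), x) := by
    rw [← hfib3, Finset.mul_sum, ← Finset.sum_add_distrib]
    apply Finset.sum_congr rfl
    intro j _
    have hstep : ∑ β ∈ F.filter (fun β => β % (e:ℤ) = ((j:ℕ):ℤ)), β
        = ((F.filter (fun β => β % (e:ℤ) = ((j:ℕ):ℤ))).card : ℤ) * ((j:ℕ):ℤ)
          + (e:ℤ) * ∑ β ∈ F.filter (fun β => β % (e:ℤ) = ((j:ℕ):ℤ)), β / (e:ℤ) := by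
      calc ∑ β ∈ F.filter (fun β => β % (e:ℤ) = ((j:ℕ):ℤ)), β
          = ∑ β ∈ F.filter (fun β => β % (e:ℤ) = ((j:ℕ):ℤ)), (((j:ℕ):ℤ) + (e:ℤ) * (β/(e:ℤ))) := by
            apply Finset.sum_congr rfl
            intro β hβ
            have hm := (Finset.mem_filter.mp hβ).2
            have hd := Int.emod_add_mul_ediv β (e:ℤ)
            linarith
        _ = ∑ _β ∈ F.filter (fun β => β % (e:ℤ) = ((j:ℕ):ℤ)), ((j:ℕ):ℤ)
            + ∑ β ∈ F.filter (fun β => β % (e:ℤ) = ((j:ℕ):ℤ)), (e:ℤ) * (β/(e:ℤ)) :=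
              Finset.sum_add_distrib
        _ = ((F.filter (fun β => β % (e:ℤ) = ((j:ℕ):ℤ))).card : ℤ) * ((j:ℕ):ℤ)
            + (e:ℤ) * ∑ β ∈ F.filter (fun β => β % (e:ℤ) = ((j:ℕ):ℤ)), β / (e:ℤ) := by
            rw [Finset.sum_const, nsmul_eq_mul, Finset.mul_sum]
    rw [hstep, (keyQ j).1, (keyQ j).2]
  have hrunF' : ∑ β ∈ F', β
      = (∑ j : Fin e, (se j - (((1 - (e:ℤ)*(l:ℤ)*(P:ℤ)) - 1 - ((j:ℕ):ℤ))/(e:ℤ) + 1)) * ((j:ℕ):ℤ))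
        + (e:ℤ) * ∑ j : Fin e, ((psize (g' j) : ℤ)
          + ∑ x ∈ Finset.Ico (((1 - (e:ℤ)*(l:ℤ)*(P:ℤ)) - 1 - ((j:ℕ):ℤ))/(e:ℤ) + 1) (se j), x) := by
    rw [← hfib3', Finset.mul_sum, ← Finset.sum_add_distrib]
    apply Finset.sum_congr rfl
    intro j _
    have hstep : ∑ β ∈ F'.filter (fun β => β % (e:ℤ) = ((j:ℕ):ℤ)), β
        = ((F'.filter (fun β => β % (e:ℤ) = ((j:ℕ):ℤ))).card : ℤ) * ((j:ℕ):ℤ)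
          + (e:ℤ) * ∑ β ∈ F'.filter (fun β => β % (e:ℤ) = ((j:ℕ):ℤ)), β / (e:ℤ) := by
      calc ∑ β ∈ F'.filter (fun β => β % (e:ℤ) = ((j:ℕ):ℤ)), β
          = ∑ β ∈ F'.filter (fun β => β % (e:ℤ) = ((j:ℕ):ℤ)), (((j:ℕ):ℤ) + (e:ℤ) * (β/(e:ℤ))) := by
            apply Finset.sum_congr rfl
            intro β hβ
            have hm := (Finset.mem_filter.mp hβ).2
            have hd := Int.emod_add_mul_ediv β (e:ℤ)
            linarith
        _ = ∑ _β ∈ F'.filter (fun β => β % (e:ℤ) = ((j:ℕ):ℤ)), ((j:ℕ):ℤ)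
            + ∑ β ∈ F'.filter (fun β => β % (e:ℤ) = ((j:ℕ):ℤ)), (e:ℤ) * (β/(e:ℤ)) :=
              Finset.sum_add_distrib
        _ = ((F'.filter (fun β => β % (e:ℤ) = ((j:ℕ):ℤ))).card : ℤ) * ((j:ℕ):ℤ)
            + (e:ℤ) * ∑ β ∈ F'.filter (fun β => β % (e:ℤ) = ((j:ℕ):ℤ)), β / (e:ℤ) := by
            rw [Finset.sum_const, nsmul_eq_mul, Finset.mul_sum]
    rw [hstep, (keyQ' j).1, (keyQ' j).2]
  -- conclude
  have hcancel : (e:ℤ) * ∑ j : Fin e, ((psize (g j) : ℤ)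
        + ∑ x ∈ Finset.Ico (((1 - (e:ℤ)*(l:ℤ)*(P:ℤ)) - 1 - ((j:ℕ):ℤ))/(e:ℤ) + 1) (se j), x)
      = (e:ℤ) * ∑ j : Fin e, ((psize (g' j) : ℤ)
        + ∑ x ∈ Finset.Ico (((1 - (e:ℤ)*(l:ℤ)*(P:ℤ)) - 1 - ((j:ℕ):ℤ))/(e:ℤ) + 1) (se j), x) := by
    have h := hFF'
    rw [hrunF, hrunF'] at h
    linarith
  have h2 := mul_left_cancel₀ hE.ne' hcancel
  rw [Finset.sum_add_distrib, Finset.sum_add_distrib] at h2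
  have h3 : ∑ j : Fin e, (psize (g j) : ℤ) = ∑ j : Fin e, (psize (g' j) : ℤ) := by linarith
  exact_mod_cast h3
end

section
/- Fix e ≥ 2, l ≥ 1 and s^l ∈ 𝒜^l_e. If the l-symbol (X₀,…,X_{l-1}) of (λ^l, s^l) satisfies X₀ ⊂ X₁ ⊂ ⋯ ⊂ X_{l-1} ⊂ X₀ + e, and λ^l admits an addable i-node (for some residue i), then λ^l admits no removable i-node. -/
/-- if the `l`-symbol of `(λ^l, s^l)` satisfies the core chain
condition and `λ^l` admits an addable `i`-node, then it admits no removable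
`i`-node. -/
theorem no_removable_of_addable (e l : ℕ) (he : 2 ≤ e) [NeZero l]
    (s : Fin l → ℤ) (hs : ∀ i j : Fin l, i < j → 0 ≤ s j - s i ∧ s j - s i < e)
    (L : Fin l → ℕ → ℕ) (hL : ∀ c, IsPartition (L c))
    (hcore : IsECorePair e l L s) (i : Fin e)
    (hadd : HasAddableNode e l L s (i : ℤ)) :
    ¬ HasRemovableNode e l L s (i : ℤ) := by
  rintro ⟨c', γ, hγ, hγ1, hγmod⟩
  obtain ⟨c, β, hβ, hβ1, hβmod⟩ := hadd
  obtain ⟨hchain, hshift⟩ := hcore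
  have hel : ∀ a : Fin l, a ≤ finLast' l := by
    intro a
    rw [Fin.le_def]
    simpa [finLast'] using Nat.le_sub_one_of_lt a.isLt
  have hzl : ∀ a : Fin l, (0 : Fin l) ≤ a := by
    intro a
    rw [Fin.le_def]
    simp
  have key : ∀ a b : Fin l, ∀ x : ℤ, x ∈ betaSet (s b) (L b) →
      x - e ∈ betaSet (s a) (L a) := by
    intro a b x hx
    have h1 := hchain b (finLast' l) (hel b) hx
    have h2 : x - e ∈ betaSet (s 0) (L 0) := hshift h1
    exact hchain 0 a (hzl a) h2
  have nm : ∀ a b : Fin l, ∀ x : ℤ, x ∉ betaSet (s a) (L a) →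
      x + e ∉ betaSet (s b) (L b) := by
    intro a b x hx h
    exact hx (by simpa using key a b (x + e) h)
  have up : ∀ (n : ℕ) (a b : Fin l) (x : ℤ), x ∉ betaSet (s a) (L a) →
      x + ((n : ℤ) + 1) * e ∉ betaSet (s b) (L b) := by
    intro n
    induction n with
    | zero => intro a b x hx; simpa using nm a b x hx
    | succ n ih =>
      intro a b x hx
      have h2 := nm b b _ (ih a b x hx)
      have heq : x + ((n : ℤ) + 1) * e + e = x + (((n + 1 : ℕ) : ℤ) + 1) * e := by
        push_cast; ring
      rw [heq] at h2
      exact h2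
  have hdvd : (e : ℤ) ∣ γ - (β + 1) := by
    apply Int.dvd_of_emod_eq_zero
    rw [← Int.emod_eq_emod_iff_emod_sub_eq_zero]
    exact hγmod.trans hβmod.symm
  obtain ⟨k, hk⟩ := hdvd
  rcases lt_trichotomy k 0 with hk0 | hk0 | hk0
  · -- removable strictly below addable: β = (γ - 1) + (n+1)·e
    set n : ℕ := (-k - 1).toNat with hn
    have hn' : (n : ℤ) = -k - 1 := Int.toNat_of_nonneg (by omega)
    have heq : β = γ - 1 + ((n : ℤ) + 1) * e := by
      have h1 : (n : ℤ) + 1 = -k := by omega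
      rw [h1]
      have := mul_comm k (e : ℤ)
      linarith
    rw [heq] at hβ
    exact up n c' c (γ - 1) hγ1 hβ
  · -- γ = β + 1
    have heq : γ = β + 1 := by
      rw [hk0, mul_zero] at hk; omega
    rcases le_total c c' with hcc | hcc
    · exact hγ1 (by rw [show γ - 1 = β by omega]; exact hchain c c' hcc hβ)
    · exact hβ1 (heq ▸ hchain c' c hcc hγ)
  · -- γ = (β + 1) + (n+1)·e
    set n : ℕ := (k - 1).toNat with hn
    have hn' : (n : ℤ) = k - 1 := Int.toNat_of_nonneg (by omega)
    have heq : γ = β + 1 + ((n : ℤ) + 1) * e := by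
      have h1 : (n : ℤ) + 1 = k := by omega
      rw [h1]
      have := mul_comm k (e : ℤ)
      linarith
    rw [heq] at hγ
    exact up n c c' (β + 1) hβ1 hγ
end
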